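/- If p : X̃ → X is a local homeomorphism, then p has unique path lifting: for any continuous maps g, h : [0,1] → X̃ with p ∘ g = p ∘ h and g(0) = h(0), we have g = h. -/

import Mathlib

open unitInterval

noncomputable section

/-- The homotopy class of a loop, as an element of the fundamental group. -/
def pathClass {X : Type*} [TopologicalSpace X] {x : X} (γ : Path x x) :
    FundamentalGroup X x :=
  FundamentalGroup.fromPath (X := TopCat.of X) (Quotient.mk (Path.Homotopic.setoid x x) γ)

/-- A continuous path in `X` starting at the basepoint `x`. -/
structure RawPath (X : Type*) [TopologicalSpace X] (x : X) where
  toFun : C(unitInterval, X)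
  source : toFun 0 = x

variable {X : Type*} [TopologicalSpace X] {x : X}

/-- The endpoint `α(1)` of a path starting at the basepoint. -/
def RawPath.endpt (α : RawPath X x) : X := α.toFun 1

/-- A raw path, as a bundled `Path` from `x` to its endpoint. -/
def RawPath.path (α : RawPath X x) : Path x α.endpt := ⟨α.toFun, α.source, rfl⟩

/-- The relation `α ∼ β` iff `α(1) = β(1)` and `[α · β⁻] ∈ H`. -/
def SpanierRel (H : Subgroup (FundamentalGroup X x)) (α β : RawPath X x) : Prop :=
  ∃ hend : α.endpt = β.endpt,
    pathClass (α.path.trans (β.path.symm.cast hend rfl)) ∈ H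

/-- The space `X̃`: paths starting at `x`, modulo `α ∼ β` iff `α(1) = β(1)`
and `[α · β⁻] ∈ H`. -/
def SpanierSpace (H : Subgroup (FundamentalGroup X x)) : Type _ :=
  Quot (SpanierRel H)

/-- The equivalence class `⟨α⟩ ∈ X̃` of a path `α` starting at `x`. -/
def SpanierSpace.mk (H : Subgroup (FundamentalGroup X x)) (α : RawPath X x) :
    SpanierSpace H :=
  Quot.mk _ α

/-- The endpoint projection `p : X̃ → X`, `p ⟨α⟩ = α(1)`. -/
def spanierProj (H : Subgroup (FundamentalGroup X x)) : SpanierSpace H → X :=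
  Quot.lift RawPath.endpt (fun _ _ hab => by obtain ⟨h, -⟩ := hab; exact h)

/-- The concatenation `α · γ` of a path `α` starting at `x` with a path `γ`
starting at `α(1)`. -/
def RawPath.extend (α : RawPath X x) {y : X} (γ : Path α.endpt y) : RawPath X x :=
  ⟨(α.path.trans γ).toContinuousMap, (α.path.trans γ).source'⟩

/-- The basic set `⟨α,U⟩ = {⟨α·γ⟩ : γ a continuous path in U with γ(0) = α(1)}`. -/
def basicSet (H : Subgroup (FundamentalGroup X x)) (α : RawPath X x) (U : Set X) :
    Set (SpanierSpace H) :=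
  {z | ∃ (y : X) (γ : Path α.endpt y), Set.range γ ⊆ U ∧ z = SpanierSpace.mk H (α.extend γ)}

/-- The topology on `X̃` generated by the basic sets `⟨α,U⟩` with `U` open
and `α(1) ∈ U`. -/
instance spanierTopology (H : Subgroup (FundamentalGroup X x)) :
    TopologicalSpace (SpanierSpace H) :=
  TopologicalSpace.generateFrom
    {S | ∃ (α : RawPath X x) (U : Set X), IsOpen U ∧ α.endpt ∈ U ∧ S = basicSet H α U}

/-- The subgroup-like subset `π(α,U) = [α]·i_#(π₁(U,α(1)))·[α]⁻¹` of `π₁(X,x)`: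
all classes `[α·γ·α⁻]` with `γ` a loop at `α(1)` inside `U`. -/
def piSet (α : RawPath X x) (U : Set X) : Set (FundamentalGroup X x) :=
  {g | ∃ γ : Path α.endpt α.endpt, Set.range γ ⊆ U ∧
    g = pathClass (α.path.trans (γ.trans α.path.symm))}

end

noncomputable section AuxLemmas

open CategoryTheory

attribute [local instance] Path.Homotopic.setoid

variable {X : Type*} [TopologicalSpace X] {x : X}

/-- The class of a path as a morphism in the fundamental groupoid. -/
def hQ {a b : X} (p : Path a b) : FundamentalGroupoid.mk a ⟶ FundamentalGroupoid.mk b := ⟦p⟧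

lemma hQ_trans {a b c : X} (p : Path a b) (q : Path b c) : hQ (p.trans q) = hQ p ≫ hQ q :=
  rfl

lemma hQ_symm {a b : X} (p : Path a b) : hQ p.symm = Groupoid.inv (hQ p) := rfl

lemma hQ_refl {a : X} : hQ (Path.refl a) = 𝟙 (FundamentalGroupoid.mk a) := rfl

lemma pathClass_congr {u v : Path x x} (h : hQ u = hQ v) : pathClass u = pathClass v := by
  unfold pathClass
  exact congrArg _ h

lemma pathClass_mul (u v : Path x x) : pathClass u * pathClass v = pathClass (v.trans u) := by
  exact (hQ_trans v u).symm

lemma pathClass_one : pathClass (Path.refl x) = (1 : FundamentalGroup X x) := by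
  rfl

/-- `dD h p q` is the class `[p · q⁻]`. -/
def dD {a b : X} (h : a = b) (p : Path x a) (q : Path x b) : FundamentalGroup X x :=
  pathClass (p.trans (q.symm.cast h rfl))

lemma dD_self {a : X} (p : Path x a) : dD rfl p p = 1 := by
  rw [← pathClass_one]
  show pathClass (p.trans p.symm) = _
  apply pathClass_congr
  simp [Path.trans_symm, hQ_trans, hQ_symm, hQ_refl, Groupoid.inv_eq_inv]

lemma dD_symm {a b : X} (h : a = b) (p : Path x a) (q : Path x b) :
    dD h.symm q p = (dD h p q)⁻¹ := by
  subst h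
  apply eq_inv_of_mul_eq_one_left
  show pathClass (q.trans p.symm) * pathClass (p.trans q.symm) = 1
  rw [pathClass_mul, ← pathClass_one]
  apply pathClass_congr
  simp [Path.trans_symm, hQ_trans, hQ_symm, hQ_refl, Groupoid.inv_eq_inv]

lemma dD_trans {a b c : X} (h1 : a = b) (h2 : b = c)
    (p : Path x a) (q : Path x b) (r : Path x c) :
    dD (h1.trans h2) p r = dD h2 q r * dD h1 p q := by
  subst h1; subst h2
  show pathClass (p.trans r.symm) = pathClass (q.trans r.symm) * pathClass (p.trans q.symm)
  rw [pathClass_mul]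
  apply pathClass_congr
  simp [Path.trans_symm, hQ_trans, hQ_symm, hQ_refl, Groupoid.inv_eq_inv]

lemma dD_extend {a b y c c' : X} (h : a = b) (p : Path x a) (q : Path x b) (γ : Path a y)
    (hc : c = y) (hc' : c' = y) (hcc : c = c') :
    dD hcc ((p.trans γ).cast rfl hc) ((q.trans (γ.cast h.symm rfl)).cast rfl hc') = dD h p q := by
  subst h; subst hc; subst hc'
  show pathClass ((p.trans γ).trans ((q.trans γ).symm)) = pathClass (p.trans q.symm)
  apply pathClass_congr
  simp [Path.trans_symm, hQ_trans, hQ_symm, hQ_refl, Groupoid.inv_eq_inv]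

lemma dD_assoc {a cc y c₁ c₂ c₃ : X} (p : Path x a) (γ : Path a cc)
    (hc : c₁ = cc) (δ : Path c₁ y) (t₁ : c₂ = y) (t₂ : c₃ = y) (h : c₂ = c₃) :
    dD h ((((p.trans γ).cast rfl hc).trans δ).cast rfl t₁)
      ((p.trans (γ.trans (δ.cast hc.symm rfl))).cast rfl t₂) = 1 := by
  subst hc; subst t₁; subst t₂
  rw [← pathClass_one]
  show pathClass (((p.trans γ).trans δ).trans ((p.trans (γ.trans δ)).symm)) = _
  apply pathClass_congr
  simp [Path.trans_symm, hQ_trans, hQ_symm, hQ_refl, Groupoid.inv_eq_inv]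

lemma dD_loop {a c₁ c₂ : X} (p : Path x a) (γ : Path a a)
    (t₁ : c₁ = a) (t₂ : c₂ = a) (h : c₁ = c₂) :
    dD h ((p.trans γ).cast rfl t₁) ((p.trans (Path.refl a)).cast rfl t₂) =
      pathClass (p.trans (γ.trans p.symm)) := by
  subst t₁; subst t₂
  show pathClass ((p.trans γ).trans ((p.trans (Path.refl _)).symm)) = _
  apply pathClass_congr
  simp [Path.trans_symm, hQ_trans, hQ_symm, hQ_refl, Groupoid.inv_eq_inv]

lemma dD_refl_right {a c : X} (p : Path x a) (t₁ : c = a) (h : c = a) :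
    dD h ((p.trans (Path.refl a)).cast rfl t₁) p = 1 := by
  subst t₁
  rw [← pathClass_one]
  show pathClass ((p.trans (Path.refl _)).trans p.symm) = _
  apply pathClass_congr
  simp [Path.trans_symm, hQ_trans, hQ_symm, hQ_refl, Groupoid.inv_eq_inv]

lemma dD_conj {a b y y' c₁ c₂ : X} (h : a = b) (e : y' = y)
    (p : Path x a) (q : Path x b) (γ : Path a y) (δ : Path b y')
    (t₁ : c₁ = y) (t₂ : c₂ = y') (h' : c₁ = c₂) :
    dD h p q =
      (pathClass (q.trans ((((γ.cast h.symm e).trans δ.symm)).trans q.symm)))⁻¹ *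
        dD h' ((p.trans γ).cast rfl t₁) ((q.trans δ).cast rfl t₂) := by
  subst h; subst e; subst t₁; subst t₂
  rw [eq_inv_mul_iff_mul_eq]
  show pathClass (q.trans ((γ.trans δ.symm).trans q.symm)) * pathClass (p.trans q.symm) =
    pathClass ((p.trans γ).trans ((q.trans δ).symm))
  rw [pathClass_mul]
  apply pathClass_congr
  simp [Path.trans_symm, hQ_trans, hQ_symm, hQ_refl, Groupoid.inv_eq_inv]

lemma RawPath.endpt_extend (α : RawPath X x) {y : X} (γ : Path α.endpt y) :
    (α.extend γ).endpt = y := (α.path.trans γ).target'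

lemma RawPath.path_extend (α : RawPath X x) {y : X} (γ : Path α.endpt y) :
    (α.extend γ).path = (α.path.trans γ).cast rfl (α.endpt_extend γ) := rfl

lemma range_cast {a b a' b' : X} (γ : Path a b) (ha : a' = a) (hb : b' = b) :
    Set.range ⇑(γ.cast ha hb) = Set.range ⇑γ := by rw [Path.cast_coe]

variable {H : Subgroup (FundamentalGroup X x)}

lemma spanierRel_equivalence : Equivalence (SpanierRel H) where
  refl α := ⟨rfl, by
    show dD rfl α.path α.path ∈ H
    rw [dD_self]; exact H.one_mem⟩
  symm {α β} := fun ⟨h, hm⟩ => ⟨h.symm, by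
    show dD h.symm β.path α.path ∈ H
    rw [dD_symm h]
    exact H.inv_mem hm⟩
  trans {α β γ} := fun ⟨h1, m1⟩ ⟨h2, m2⟩ => ⟨h1.trans h2, by
    show dD (h1.trans h2) α.path γ.path ∈ H
    rw [dD_trans h1 h2 α.path β.path γ.path]
    exact H.mul_mem m2 m1⟩

lemma rel_of_mk_eq {α β : RawPath X x} (h : SpanierSpace.mk H α = SpanierSpace.mk H β) :
    SpanierRel H α β :=
  (spanierRel_equivalence.eqvGen_iff).mp (Quot.eqvGen_exact h)

lemma mk_extend_congr {α β : RawPath X x} (h : α.endpt = β.endpt)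
    (hm : dD h α.path β.path ∈ H) {y : X} (γ : Path α.endpt y) :
    SpanierSpace.mk H (α.extend γ) = SpanierSpace.mk H (β.extend (γ.cast h.symm rfl)) := by
  apply Quot.sound
  refine ⟨(α.endpt_extend γ).trans (β.endpt_extend _).symm, ?_⟩
  show dD _ (α.extend γ).path (β.extend (γ.cast h.symm rfl)).path ∈ H
  rw [RawPath.path_extend, RawPath.path_extend, dD_extend h α.path β.path γ]
  exact hm

lemma mk_extend_extend (α : RawPath X x) {c y : X} (γ : Path α.endpt c)
    (δ : Path (α.extend γ).endpt y) :
    SpanierSpace.mk H ((α.extend γ).extend δ) =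
      SpanierSpace.mk H (α.extend (γ.trans (δ.cast (α.endpt_extend γ).symm rfl))) := by
  apply Quot.sound
  refine ⟨((α.extend γ).endpt_extend δ).trans (α.endpt_extend _).symm, ?_⟩
  show dD _ _ _ ∈ H
  rw [RawPath.path_extend, RawPath.path_extend, RawPath.path_extend,
    dD_assoc α.path γ (α.endpt_extend γ) δ]
  exact H.one_mem

lemma mk_extend_refl (α : RawPath X x) :
    SpanierSpace.mk H (α.extend (Path.refl α.endpt)) = SpanierSpace.mk H α := by
  apply Quot.sound
  refine ⟨α.endpt_extend _, ?_⟩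
  show dD _ _ _ ∈ H
  rw [RawPath.path_extend, dD_refl_right]
  exact H.one_mem

lemma mem_basicSet_self {α : RawPath X x} {U : Set X} (h : α.endpt ∈ U) :
    SpanierSpace.mk H α ∈ basicSet H α U :=
  ⟨α.endpt, Path.refl _, by rw [Path.refl_range]; exact Set.singleton_subset_iff.mpr h,
    (mk_extend_refl α).symm⟩

lemma basicSet_mono {α : RawPath X x} {U V : Set X} (hUV : U ⊆ V) :
    basicSet H α U ⊆ basicSet H α V := by
  rintro z ⟨y, γ, hr, rfl⟩
  exact ⟨y, γ, hr.trans hUV, rfl⟩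

lemma basicSet_subset_of_mem {α α' : RawPath X x} {U : Set X}
    (hmem : SpanierSpace.mk H α ∈ basicSet H α' U) :
    basicSet H α U ⊆ basicSet H α' U := by
  obtain ⟨c, γ₀, hγ₀, hα⟩ := hmem
  obtain ⟨h, hm⟩ := rel_of_mk_eq hα
  rintro z ⟨y, δ, hδ, rfl⟩
  refine ⟨y, γ₀.trans ((δ.cast h.symm rfl).cast (α'.endpt_extend γ₀).symm rfl), ?_, ?_⟩
  · rw [Path.trans_range]
    exact Set.union_subset hγ₀ (by rw [range_cast, range_cast]; exact hδ)
  · exact (mk_extend_congr h hm δ).trans (mk_extend_extend α' γ₀ (δ.cast h.symm rfl))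

lemma isOpen_basicSet {α : RawPath X x} {U : Set X} (hU : IsOpen U) (hm : α.endpt ∈ U) :
    IsOpen (basicSet H α U) :=
  TopologicalSpace.isOpen_generateFrom_of_mem ⟨α, U, hU, hm, rfl⟩

lemma exists_basicSet_subset {S : Set (SpanierSpace H)} (hS : IsOpen S) :
    ∀ α : RawPath X x, SpanierSpace.mk H α ∈ S →
      ∃ U, IsOpen U ∧ α.endpt ∈ U ∧ basicSet H α U ⊆ S := by
  have hS' : TopologicalSpace.GenerateOpen
      {S | ∃ (α : RawPath X x) (U : Set X), IsOpen U ∧ α.endpt ∈ U ∧ S = basicSet H α U} S := hS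
  clear hS
  induction hS' with
  | basic S hSb =>
    intro α hα
    obtain ⟨α', U, hU, hm', rfl⟩ := hSb
    refine ⟨U, hU, ?_, basicSet_subset_of_mem hα⟩
    obtain ⟨y, γ, hγ, hα'⟩ := hα
    have hproj : α.endpt = (α'.extend γ).endpt := congrArg (spanierProj H) hα'
    rw [hproj, α'.endpt_extend γ]
    exact hγ ⟨1, γ.target⟩
  | univ => exact fun α _ => ⟨Set.univ, isOpen_univ, trivial, Set.subset_univ _⟩
  | inter S T _ _ ihS ihT =>
    intro α hα
    obtain ⟨U, hU, hmU, hsU⟩ := ihS α hα.1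
    obtain ⟨V, hV, hmV, hsV⟩ := ihT α hα.2
    exact ⟨U ∩ V, hU.inter hV, ⟨hmU, hmV⟩,
      Set.subset_inter ((basicSet_mono Set.inter_subset_left).trans hsU)
        ((basicSet_mono Set.inter_subset_right).trans hsV)⟩
  | sUnion 𝒮 _ ih =>
    intro α hα
    obtain ⟨S, hS𝒮, hαS⟩ := hα
    obtain ⟨U, hU, hm, hsub⟩ := ih S hS𝒮 α hαS
    exact ⟨U, hU, hm, hsub.trans (Set.subset_sUnion_of_mem hS𝒮)⟩

lemma exists_inj_nbhd (inj : IsLocallyInjective (spanierProj H)) (α : RawPath X x) :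
    ∃ U, IsOpen U ∧ α.endpt ∈ U ∧
      ∀ γ : Path α.endpt α.endpt, Set.range ⇑γ ⊆ U →
        pathClass (α.path.trans (γ.trans α.path.symm)) ∈ H := by
  obtain ⟨N, hNo, hNm, hNi⟩ := inj (SpanierSpace.mk H α)
  obtain ⟨U, hU, hm, hsub⟩ := exists_basicSet_subset hNo α hNm
  refine ⟨U, hU, hm, fun γ hγ => ?_⟩
  have h1 : SpanierSpace.mk H (α.extend γ) ∈ basicSet H α U := ⟨_, γ, hγ, rfl⟩
  have h2 : SpanierSpace.mk H (α.extend (Path.refl α.endpt)) ∈ basicSet H α U :=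
    ⟨_, _, by rw [Path.refl_range]; exact Set.singleton_subset_iff.mpr hm, rfl⟩
  have heq : SpanierSpace.mk H (α.extend γ) = SpanierSpace.mk H (α.extend (Path.refl _)) := by
    apply hNi (hsub h1) (hsub h2)
    show (α.extend γ).endpt = (α.extend _).endpt
    rw [α.endpt_extend, α.endpt_extend]
  obtain ⟨h', hm'⟩ := rel_of_mk_eq heq
  have hm'' : dD h' (α.extend γ).path (α.extend (Path.refl α.endpt)).path ∈ H := hm'
  rw [RawPath.path_extend, RawPath.path_extend, dD_loop] at hm''
  exact hm''

lemma isSeparatedMap_spanierProj (inj : IsLocallyInjective (spanierProj H)) :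
    IsSeparatedMap (spanierProj H) := by
  intro z₁ z₂ he hne
  induction z₁ using Quot.ind with | _ α => ?_
  induction z₂ using Quot.ind with | _ β => ?_
  have hend : α.endpt = β.endpt := he
  obtain ⟨U, hUo, hUm, hUπ⟩ := exists_inj_nbhd inj α
  obtain ⟨V, hVo, hVm, hVπ⟩ := exists_inj_nbhd inj β
  refine ⟨basicSet H α (U ∩ V), basicSet H β (U ∩ V),
    isOpen_basicSet (hUo.inter hVo) ⟨hUm, hend ▸ hVm⟩,
    isOpen_basicSet (hUo.inter hVo) ⟨hend ▸ hUm, hVm⟩,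
    mem_basicSet_self ⟨hUm, hend ▸ hVm⟩, mem_basicSet_self ⟨hend ▸ hUm, hVm⟩, ?_⟩
  rw [Set.disjoint_left]
  rintro z ⟨y, γ, hγ, rfl⟩ ⟨y', δ, hδ, hz⟩
  obtain ⟨h₁, hm₁'⟩ := rel_of_mk_eq hz
  have hm₁ : dD h₁ (α.extend γ).path (β.extend δ).path ∈ H := hm₁'
  have e : y' = y := (β.endpt_extend δ).symm.trans (h₁.symm.trans (α.endpt_extend γ))
  rw [RawPath.path_extend, RawPath.path_extend] at hm₁
  have hloop : pathClass (β.path.trans ((((γ.cast hend.symm e).trans δ.symm)).trans β.path.symm))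
      ∈ H := by
    apply hVπ
    rw [Path.trans_range]
    apply Set.union_subset
    · rw [range_cast]; exact hγ.trans Set.inter_subset_right
    · rw [Path.symm_range]; exact hδ.trans Set.inter_subset_right
  have hrel : SpanierRel H α β := by
    refine ⟨hend, ?_⟩
    show dD hend α.path β.path ∈ H
    rw [dD_conj hend e α.path β.path γ δ (α.endpt_extend γ) (β.endpt_extend δ) h₁]
    exact H.mul_mem (H.inv_mem hloop) hm₁
  exact hne (Quot.sound hrel)

end AuxLemmas

/-- If `p : X̃ → X` is a local homeomorphism, then it has unique path lifting:
continuous paths `g, h : [0,1] → X̃` with `p ∘ g = p ∘ h` and `g 0 = h 0` coincide. -/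
theorem spanierProj_unique_path_lifting_of_isLocalHomeomorph
    {X : Type*} [TopologicalSpace X] {x : X} (H : Subgroup (FundamentalGroup X x))
    (hp : IsLocalHomeomorph (spanierProj H))
    {g h : unitInterval → SpanierSpace H} (hg : Continuous g) (hh : Continuous h)
    (hcomp : spanierProj H ∘ g = spanierProj H ∘ h) (h0 : g 0 = h 0) : g = h := by
  have inj := hp.isLocallyInjective
  have sep := isSeparatedMap_spanierProj inj
  exact sep.eq_of_comp_eq inj hg hh hcomp 0 h0
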